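/- Let $\sigma>0$, $0<t<\infty$, $k\in\mathbb{Z}$, and $0<\epsilon<\sigma-d/t$ with $\sigma>d/t$. Define $E_0=\{y\in\mathbb{R}^d:|y|\le 2^{-k}\}$ and $E_j=\{y:2^{-k+j-1}<|y|\le 2^{-k+j}\}$ for $j\ge 1$. Then for any measurable function $f$ and any $x\in\mathbb{R}^d$, $\int_{\mathbb{R}^d}\frac{|f(x-y)|^t}{(1+2^k|y|)^{\sigma t}}\,dy \le C\, 2^{-kd}\big(\mathcal{M}_t^{k,\epsilon}f(x)\big)^t$, where $C$ depends only on $d,t,\sigma,\epsilon$. -/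

import Mathlib

open MeasureTheory ENNReal

noncomputable section

abbrev Euc (d : ℕ) := EuclideanSpace ℝ (Fin d)

/-- The axis-parallel cube with lower corner `a` and side length `l`. -/
def cube (d : ℕ) (a : Euc d) (l : ℝ) : Set (Euc d) :=
  {y | ∀ i, a i ≤ y i ∧ y i ≤ a i + l}

/-- The maximal operator `𝓜_r^{k,ε}` from the paper: averages over small cubes
(`2^k l(Q) ≤ 1`) plus damped averages over large cubes. -/
noncomputable def Mrke (d : ℕ) (r ε : ℝ) (k : ℤ) (f : Euc d → ℂ) (x : Euc d) : ℝ≥0∞ :=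
  (⨆ (a : Euc d) (l : ℝ) (_ : 0 < l) (_ : (2:ℝ)^k * l ≤ 1) (_ : x ∈ cube d a l),
      ((volume (cube d a l))⁻¹ * ∫⁻ y in cube d a l, (‖f y‖₊ : ℝ≥0∞) ^ r) ^ (1/r))
  + (⨆ (a : Euc d) (l : ℝ) (_ : 0 < l) (_ : 1 < (2:ℝ)^k * l) (_ : x ∈ cube d a l),
      ENNReal.ofReal (((2:ℝ)^k * l) ^ (-ε)) *
        ((volume (cube d a l))⁻¹ * ∫⁻ y in cube d a l, (‖f y‖₊ : ℝ≥0∞) ^ r) ^ (1/r))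

lemma cube_eq (d : ℕ) (a : Euc d) (l : ℝ) :
    cube d a l = WithLp.ofLp ⁻¹' Set.pi Set.univ (fun i => Set.Icc (a i) (a i + l)) := by
  ext y
  simp only [cube, Set.mem_setOf_eq, Set.mem_preimage]
  exact Iff.symm (by exact Set.mem_univ_pi.trans (by simp only [Set.mem_Icc]))

lemma measurableSet_cube (d : ℕ) (a : Euc d) (l : ℝ) : MeasurableSet (cube d a l) := by
  rw [cube_eq]; exact (MeasurableSet.univ_pi fun i => measurableSet_Icc).preimage (WithLp.measurable_ofLp 2 _)

lemma volume_cube (d : ℕ) (a : Euc d) (l : ℝ) :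
    volume (cube d a l) = ENNReal.ofReal l ^ d := by
  rw [cube_eq,
    (PiLp.volume_preserving_ofLp (Fin d)).measure_preimage
      (MeasurableSet.univ_pi fun i : Fin d => measurableSet_Icc).nullMeasurableSet]
  rw [volume_pi_pi]
  simp [Real.volume_Icc]

lemma abs_coord_le_norm (d : ℕ) (y : Euc d) (i : Fin d) : |y i| ≤ ‖y‖ := by
  rw [EuclideanSpace.norm_eq, ← Real.sqrt_sq_eq_abs]
  apply Real.sqrt_le_sqrt
  have := Finset.single_le_sum (f := fun i => ‖y i‖^2) (fun i _ => sq_nonneg _) (Finset.mem_univ i)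
  simpa [Real.norm_eq_abs, sq_abs] using this

theorem stmt0 (d : ℕ) (hd : 0 < d) (σ t ε : ℝ) (ht : 0 < t) (hσ : (d:ℝ)/t < σ)
    (hε0 : 0 < ε) (hε : ε < σ - (d:ℝ)/t) :
    ∃ C : ℝ≥0∞, C ≠ ∞ ∧ ∀ (k : ℤ) (f : Euc d → ℂ), Measurable f → ∀ x : Euc d,
      (∫⁻ y, (‖f (x - y)‖₊ : ℝ≥0∞) ^ t / ENNReal.ofReal ((1 + (2:ℝ)^k * ‖y‖) ^ (σ * t)))
        ≤ C * ENNReal.ofReal ((2:ℝ) ^ (-(k:ℝ) * d)) * (Mrke d t ε k f x) ^ t := by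
  have ht' : t ≠ 0 := ht.ne'
  have hσ0 : 0 < σ := lt_of_le_of_lt (div_nonneg (Nat.cast_nonneg d) ht.le) hσ
  have hσt : 0 < σ * t := mul_pos hσ0 ht
  have hexp : (d:ℝ) + ε * t - σ * t < 0 := by
    have h1 : ε * t < (σ - (d:ℝ)/t) * t := mul_lt_mul_of_pos_right hε ht
    rw [sub_mul, div_mul_cancel₀ _ ht'] at h1
    linarith
  set c : ℝ := (2:ℝ) ^ (σ * t + d + ε * t) with hcdef
  set r : ℝ := (2:ℝ) ^ ((d:ℝ) + ε * t - σ * t) with hrdef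
  have hc0 : 0 < c := Real.rpow_pos_of_pos two_pos _
  have hr0 : 0 < r := Real.rpow_pos_of_pos two_pos _
  have hr1 : r < 1 := Real.rpow_lt_one_of_one_lt_of_neg one_lt_two hexp
  refine ⟨ENNReal.ofReal c * (1 - ENNReal.ofReal r)⁻¹, ?_, ?_⟩
  · refine ENNReal.mul_ne_top ofReal_ne_top (ENNReal.inv_ne_top.2 ?_)
    simp only [ne_eq, tsub_eq_zero_iff_le, not_le]
    exact ENNReal.ofReal_lt_one.2 hr1
  intro k f hf x
  set M : ℝ≥0∞ := Mrke d t ε k f x with hM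
  set g : Euc d → ℝ≥0∞ :=
    fun y => (‖f (x - y)‖₊ : ℝ≥0∞) ^ t / ENNReal.ofReal ((1 + (2:ℝ)^k * ‖y‖) ^ (σ * t)) with hg
  have h2k : (0:ℝ) < (2:ℝ)^k := zpow_pos two_pos k
  set R : ℕ → ℝ := fun j => (2:ℝ) ^ ((j:ℤ) - k) with hRdef
  have hRpos : ∀ j, 0 < R j := fun j => zpow_pos two_pos _
  set A : ℕ → Set (Euc d) := fun j => if j = 0 then Metric.closedBall 0 (R 0)
      else Metric.closedBall 0 (R j) \ Metric.closedBall 0 (R (j-1)) with hAdef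
  -- the annuli cover the space
  have hcover : (Set.univ : Set (Euc d)) ⊆ ⋃ j, A j := by
    intro y _
    have hex : ∃ j : ℕ, ‖y‖ ≤ R j := by
      obtain ⟨n, hn⟩ := pow_unbounded_of_one_lt ((2:ℝ)^k * ‖y‖) (one_lt_two (α := ℝ))
      refine ⟨n, ?_⟩
      have h1 : (2:ℝ)^k * R n = 2 ^ (n:ℤ) := by
        rw [hRdef, ← zpow_add₀ (two_ne_zero (α := ℝ))]
        ring_nf
      have h2 : (2:ℝ)^k * ‖y‖ ≤ (2:ℝ)^k * R n := by
        rw [h1, zpow_natCast]; exact hn.le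
      exact le_of_mul_le_mul_left h2 h2k
    set n := Nat.find hex with hn
    have hspec : ‖y‖ ≤ R n := Nat.find_spec hex
    refine Set.mem_iUnion.2 ⟨n, ?_⟩
    by_cases h0 : n = 0
    · simp only [hAdef, h0, if_pos]
      rw [Metric.mem_closedBall, dist_zero_right]
      exact h0 ▸ hspec
    · simp only [hAdef, if_neg h0]
      refine ⟨by rwa [Metric.mem_closedBall, dist_zero_right], ?_⟩
      rw [Metric.mem_closedBall, dist_zero_right]
      exact Nat.find_min hex (Nat.pred_lt h0)
  have hsub : ∀ j, A j ⊆ Metric.closedBall 0 (R j) := by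
    intro j
    simp only [hAdef]
    split_ifs with h
    · subst h; exact subset_rfl
    · exact Set.diff_subset
  -- lower bound for the weight on each annulus
  have hlow : ∀ j, ∀ y ∈ A j, (2:ℝ) ^ ((j:ℤ) - 1) ≤ 1 + (2:ℝ)^k * ‖y‖ := by
    intro j y hy
    rcases Nat.eq_zero_or_pos j with h0 | hpos
    · subst h0
      have h2 : 0 ≤ (2:ℝ)^k * ‖y‖ := mul_nonneg h2k.le (norm_nonneg y)
      simp only [Nat.cast_zero, zero_sub, zpow_neg, zpow_one]
      linarith [show (2:ℝ)⁻¹ ≤ 1 by norm_num]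
    · have hj : j ≠ 0 := hpos.ne'
      simp only [hAdef, if_neg hj] at hy
      have h1 : R (j-1) < ‖y‖ := by
        have := hy.2
        rw [Metric.mem_closedBall, dist_zero_right, not_le] at this
        exact this
      have h2 : (2:ℝ)^k * R (j-1) = 2 ^ ((j:ℤ) - 1) := by
        rw [hRdef, ← zpow_add₀ (two_ne_zero (α := ℝ))]
        congr 1
        have : ((j - 1 : ℕ) : ℤ) = (j : ℤ) - 1 := by
          push_cast [Nat.cast_sub hpos]; ring
        rw [this]; ring
      have h3 : (2:ℝ)^k * R (j-1) ≤ (2:ℝ)^k * ‖y‖ :=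
        mul_le_mul_of_nonneg_left h1.le h2k.le
      rw [h2] at h3
      linarith
  -- key estimate on each annulus
  have key : ∀ j : ℕ, ∫⁻ y in A j, g y ≤
      ENNReal.ofReal (c * r ^ j) * (ENNReal.ofReal ((2:ℝ) ^ (-(k:ℝ) * d)) * M ^ t) := by
    intro j
    set a : Euc d := WithLp.toLp 2 (fun i => x i - R j) with hadef
    set l : ℝ := 2 * R j with hldef
    have hl : 0 < l := by positivity
    set Q : Set (Euc d) := cube d a l with hQdef
    have hmeas : Measurable fun z => (‖f z‖₊ : ℝ≥0∞) ^ t := hf.nnnorm.coe_nnreal_ennreal.pow_const t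
    -- Step A: pull out the weight
    have hw0 : (0:ℝ) < (2:ℝ) ^ ((j:ℤ) - 1) := zpow_pos two_pos _
    have hwpos : (0:ℝ) < ((2:ℝ) ^ ((j:ℤ) - 1)) ^ (σ * t) := Real.rpow_pos_of_pos hw0 _
    have stepA : ∫⁻ y in A j, g y ≤
        ENNReal.ofReal ((((2:ℝ) ^ ((j:ℤ) - 1)) ^ (σ * t))⁻¹) *
          ∫⁻ y in A j, (‖f (x - y)‖₊ : ℝ≥0∞) ^ t := by
      rw [← lintegral_const_mul' _ _ ofReal_ne_top]
      refine setLIntegral_mono (by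
        exact (measurable_const.mul ((hf.comp (measurable_const.sub measurable_id)).nnnorm.coe_nnreal_ennreal.pow_const t))) ?_
      intro y hy
      rw [hg]
      simp only
      rw [div_eq_mul_inv, mul_comm]
      refine mul_le_mul_left ?_ _
      rw [ENNReal.ofReal_inv_of_pos hwpos]
      refine ENNReal.inv_le_inv.2 (ENNReal.ofReal_le_ofReal ?_)
      exact Real.rpow_le_rpow hw0.le (hlow j y hy) hσt.le
    -- Step B/C: move to the cube
    have stepBC : ∫⁻ y in A j, (‖f (x - y)‖₊ : ℝ≥0∞) ^ t ≤
        ∫⁻ z in Q, (‖f z‖₊ : ℝ≥0∞) ^ t := by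
      have hpre : A j ⊆ (fun y : Euc d => x - y) ⁻¹' Q := by
        intro y hy
        have hy' : ‖y‖ ≤ R j := by
          have := hsub j hy
          rwa [Metric.mem_closedBall, dist_zero_right] at this
        simp only [Set.mem_preimage, hQdef, cube, Set.mem_setOf_eq]
        intro i
        have h1 : |y i| ≤ R j := (abs_coord_le_norm d y i).trans hy'
        rw [abs_le] at h1
        have hsubi : (x - y) i = x i - y i := rfl
        rw [hsubi]
        constructor
        · simp only [hadef, PiLp.toLp_apply]; linarith [h1.2]
        · simp only [hadef, PiLp.toLp_apply, hldef]; linarith [h1.1]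
      calc ∫⁻ y in A j, (‖f (x - y)‖₊ : ℝ≥0∞) ^ t
          ≤ ∫⁻ y in (fun y : Euc d => x - y) ⁻¹' Q, (‖f (x - y)‖₊ : ℝ≥0∞) ^ t :=
            lintegral_mono_set hpre
        _ = ∫⁻ z in Q, (‖f z‖₊ : ℝ≥0∞) ^ t :=
            (Measure.measurePreserving_sub_left volume x).setLIntegral_comp_preimage
              (measurableSet_cube d a l) hmeas
    -- Step D/E: compare with the maximal function
    have hklpos : (0:ℝ) < (2:ℝ)^k * l := by positivity
    have hRj : R j = (2:ℝ) ^ ((j:ℤ) - k) := by rw [hRdef]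
    have hl2 : l = (2:ℝ) ^ ((j:ℤ) - k + 1) := by
      rw [hldef, hRj, zpow_add₀ (two_ne_zero (α := ℝ)), zpow_one]; ring
    have hkl_eq : (2:ℝ)^k * l = 2 ^ ((j:ℤ) + 1) := by
      rw [hl2, ← zpow_add₀ (two_ne_zero (α := ℝ))]; congr 1; ring
    have hkl1 : 1 < (2:ℝ)^k * l := by
      rw [hkl_eq]
      calc (1:ℝ) < 2 := one_lt_two
        _ ≤ 2 ^ ((j:ℤ) + 1) := by
          nth_rewrite 1 [← zpow_one (2:ℝ)]
          exact zpow_le_zpow_right₀ one_le_two (by omega)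
    have hxQ : x ∈ Q := by
      simp only [hQdef, cube, Set.mem_setOf_eq]
      intro i
      constructor
      · simp only [hadef, PiLp.toLp_apply]; linarith [hRpos j]
      · simp only [hadef, PiLp.toLp_apply, hldef]; linarith [hRpos j]
    set I : ℝ≥0∞ := (volume Q)⁻¹ * ∫⁻ z in Q, (‖f z‖₊ : ℝ≥0∞) ^ t with hIdef
    have hV : volume Q = ENNReal.ofReal l ^ d := volume_cube d a l
    have hV0 : volume Q ≠ 0 := by
      rw [hV]
      exact pow_ne_zero d (ENNReal.ofReal_pos.2 hl).ne'
    have hVtop : volume Q ≠ ∞ := by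
      rw [hV]; exact ENNReal.pow_ne_top ofReal_ne_top
    have hsup : ENNReal.ofReal (((2:ℝ)^k * l) ^ (-ε)) * I ^ (1/t) ≤ M := by
      rw [hM, Mrke]
      refine le_trans ?_ le_add_self
      exact le_iSup_of_le a <| le_iSup_of_le l <| le_iSup_of_le hl <| le_iSup_of_le hkl1 <|
        le_iSup_of_le hxQ le_rfl
    have hone : ENNReal.ofReal (((2:ℝ)^k * l) ^ ε) * ENNReal.ofReal (((2:ℝ)^k * l) ^ (-ε)) = 1 := by
      rw [← ENNReal.ofReal_mul (Real.rpow_pos_of_pos hklpos _).le, ← Real.rpow_add hklpos,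
        add_neg_cancel, Real.rpow_zero, ENNReal.ofReal_one]
    have hI2 : I ^ (1/t) ≤ ENNReal.ofReal (((2:ℝ)^k * l) ^ ε) * M := by
      calc I ^ (1/t)
          = (ENNReal.ofReal (((2:ℝ)^k * l) ^ ε) * ENNReal.ofReal (((2:ℝ)^k * l) ^ (-ε))) *
              I ^ (1/t) := by rw [hone, one_mul]
        _ = ENNReal.ofReal (((2:ℝ)^k * l) ^ ε) *
              (ENNReal.ofReal (((2:ℝ)^k * l) ^ (-ε)) * I ^ (1/t)) := mul_assoc _ _ _
        _ ≤ _ := mul_le_mul_right hsup _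
    have hI3 : I ≤ ENNReal.ofReal (((2:ℝ)^k * l) ^ (ε * t)) * M ^ t := by
      have hII : I = (I ^ (1/t)) ^ t := by
        rw [← ENNReal.rpow_mul, one_div_mul_cancel ht', ENNReal.rpow_one]
      rw [hII]
      calc (I ^ (1/t)) ^ t
          ≤ (ENNReal.ofReal (((2:ℝ)^k * l) ^ ε) * M) ^ t := ENNReal.rpow_le_rpow hI2 ht.le
        _ = ENNReal.ofReal (((2:ℝ)^k * l) ^ ε) ^ t * M ^ t :=
            ENNReal.mul_rpow_of_nonneg _ _ ht.le
        _ = ENNReal.ofReal ((((2:ℝ)^k * l) ^ ε) ^ t) * M ^ t := by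
            rw [ENNReal.ofReal_rpow_of_pos (Real.rpow_pos_of_pos hklpos _)]
        _ = ENNReal.ofReal (((2:ℝ)^k * l) ^ (ε * t)) * M ^ t := by
            rw [← Real.rpow_mul hklpos.le]
    have stepD : ∫⁻ z in Q, (‖f z‖₊ : ℝ≥0∞) ^ t ≤
        volume Q * (ENNReal.ofReal (((2:ℝ)^k * l) ^ (ε * t)) * M ^ t) := by
      have : ∫⁻ z in Q, (‖f z‖₊ : ℝ≥0∞) ^ t = volume Q * I := by
        rw [hIdef, ← mul_assoc, ENNReal.mul_inv_cancel hV0 hVtop, one_mul]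
      rw [this]
      exact mul_le_mul_right hI3 _
    -- combine and identify the constant
    calc ∫⁻ y in A j, g y
        ≤ ENNReal.ofReal ((((2:ℝ) ^ ((j:ℤ) - 1)) ^ (σ * t))⁻¹) *
            ∫⁻ y in A j, (‖f (x - y)‖₊ : ℝ≥0∞) ^ t := stepA
      _ ≤ ENNReal.ofReal ((((2:ℝ) ^ ((j:ℤ) - 1)) ^ (σ * t))⁻¹) *
            (volume Q * (ENNReal.ofReal (((2:ℝ)^k * l) ^ (ε * t)) * M ^ t)) :=
          mul_le_mul_right (stepBC.trans stepD) _
      _ = ENNReal.ofReal ((((2:ℝ) ^ ((j:ℤ) - 1)) ^ (σ * t))⁻¹ * (l ^ d *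
            ((2:ℝ)^k * l) ^ (ε * t))) * M ^ t := by
          rw [hV, ← ENNReal.ofReal_pow hl.le,
            ENNReal.ofReal_mul (le_of_lt (by positivity)),
            ENNReal.ofReal_mul (by positivity : (0:ℝ) ≤ l ^ d)]
          ring
      _ = ENNReal.ofReal (c * r ^ j) * (ENNReal.ofReal ((2:ℝ) ^ (-(k:ℝ) * d)) * M ^ t) := by
          have e1 : (2:ℝ) ^ ((j:ℤ) - 1) = (2:ℝ) ^ ((j:ℝ) - 1) := by
            rw [← Real.rpow_intCast (2:ℝ) ((j:ℤ) - 1)]; congr 1; push_cast; ring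
          have e2 : l = (2:ℝ) ^ ((j:ℝ) - (k:ℝ) + 1) := by
            rw [hl2, ← Real.rpow_intCast (2:ℝ) ((j:ℤ) - k + 1)]; congr 1; push_cast; ring
          have e3 : (2:ℝ)^k * l = (2:ℝ) ^ ((j:ℝ) + 1) := by
            rw [hkl_eq, ← Real.rpow_intCast (2:ℝ) ((j:ℤ) + 1)]; congr 1; push_cast; ring
          have ereal : (((2:ℝ) ^ ((j:ℤ) - 1)) ^ (σ * t))⁻¹ * (l ^ d *
              ((2:ℝ)^k * l) ^ (ε * t)) = (c * r ^ j) * (2:ℝ) ^ (-(k:ℝ) * d) := by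
            rw [e3, e2, e1, hcdef, hrdef]
            rw [← Real.rpow_natCast ((2:ℝ) ^ ((j:ℝ) - (k:ℝ) + 1)) d,
              ← Real.rpow_natCast ((2:ℝ) ^ ((d:ℝ) + ε * t - σ * t)) j]
            rw [← Real.rpow_mul two_pos.le, ← Real.rpow_mul two_pos.le,
              ← Real.rpow_mul two_pos.le, ← Real.rpow_mul two_pos.le,
              ← Real.rpow_neg two_pos.le]
            rw [← Real.rpow_add two_pos, ← Real.rpow_add two_pos, ← Real.rpow_add two_pos,
              ← Real.rpow_add two_pos]
            congr 1; push_cast; ring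
          rw [ereal, ENNReal.ofReal_mul (by positivity)]
          ring
  -- assemble
  calc ∫⁻ y, g y
      = ∫⁻ y in Set.univ, g y := by rw [setLIntegral_univ]
    _ ≤ ∫⁻ y in ⋃ j, A j, g y := lintegral_mono_set hcover
    _ ≤ ∑' j, ∫⁻ y in A j, g y := lintegral_iUnion_le A g
    _ ≤ ∑' j : ℕ, ENNReal.ofReal (c * r ^ j) *
          (ENNReal.ofReal ((2:ℝ) ^ (-(k:ℝ) * d)) * M ^ t) := ENNReal.tsum_le_tsum key
    _ = (∑' j : ℕ, ENNReal.ofReal (c * r ^ j)) *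
          (ENNReal.ofReal ((2:ℝ) ^ (-(k:ℝ) * d)) * M ^ t) := ENNReal.tsum_mul_right
    _ = (ENNReal.ofReal c * (1 - ENNReal.ofReal r)⁻¹) *
          (ENNReal.ofReal ((2:ℝ) ^ (-(k:ℝ) * d)) * M ^ t) := by
        congr 1
        simp_rw [ENNReal.ofReal_mul hc0.le, ENNReal.ofReal_pow hr0.le,
          ENNReal.tsum_mul_left, ENNReal.tsum_geometric]
    _ = ENNReal.ofReal c * (1 - ENNReal.ofReal r)⁻¹ *
          ENNReal.ofReal ((2:ℝ) ^ (-(k:ℝ) * d)) * M ^ t := by ring
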